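/- For every integer n ≥ 1, the set PC*_n of all automorphisms α of the free group F_n for which there exist a permutation π of {1, …, n}, signs ε_1, …, ε_n ∈ {1, −1}, and words w_1, …, w_n ∈ F_n with α(x_i) = w_i⁻¹ x_{π(i)}^{ε_i} w_i for all i, is a subgroup of Aut(F_n), and this subgroup equals the subgroup of Aut(F_n) generated by {σ_1, …, σ_{n−1}, ρ_1, …, ρ_{n−1}, τ_1, …, τ_n}. -/

import Mathlib

namespace LoopBraidGroups

/-- The `i`-th generator `x_i` of the free group of rank `n`
(with junk value `1` when `i ≥ n`); indices are `0`-based. -/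
def xg (n i : ℕ) : FreeGroup (Fin n) :=
  if h : i < n then FreeGroup.of (⟨i, h⟩ : Fin n) else 1

/-- `IsSigma n i s` : `s` is the automorphism `σ_i` of the free group of rank `n`,
sending `x_i ↦ x_{i+1}`, `x_{i+1} ↦ x_{i+1}⁻¹ x_i x_{i+1}` and fixing the
other generators. -/
def IsSigma (n i : ℕ) (s : MulAut (FreeGroup (Fin n))) : Prop :=
  s (xg n i) = xg n (i + 1) ∧
    s (xg n (i + 1)) = (xg n (i + 1))⁻¹ * xg n i * xg n (i + 1) ∧
    ∀ j, j < n → j ≠ i → j ≠ i + 1 → s (xg n j) = xg n j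

/-- `IsRho n i r` : `r` is the automorphism `ρ_i`, exchanging `x_i` and `x_{i+1}`
and fixing the other generators. -/
def IsRho (n i : ℕ) (r : MulAut (FreeGroup (Fin n))) : Prop :=
  r (xg n i) = xg n (i + 1) ∧ r (xg n (i + 1)) = xg n i ∧
    ∀ j, j < n → j ≠ i → j ≠ i + 1 → r (xg n j) = xg n j

/-- `IsTau n i t` : `t` is the automorphism `τ_i`, sending `x_i ↦ x_i⁻¹` and fixing
the other generators. -/
def IsTau (n i : ℕ) (t : MulAut (FreeGroup (Fin n))) : Prop :=
  t (xg n i) = (xg n i)⁻¹ ∧ ∀ j, j < n → j ≠ i → t (xg n j) = xg n j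

/-- The set `PC*_n` of automorphisms `α` of the free group of rank `n` such that
`α(x_i) = w_i⁻¹ x_{π(i)}^{ε_i} w_i` for some permutation `π`, signs `ε_i ∈ {1, -1}`
and words `w_i`. -/
def PCStarSet (n : ℕ) : Set (MulAut (FreeGroup (Fin n))) :=
  {α | ∃ (π : Equiv.Perm (Fin n)) (ε : Fin n → ℤ) (w : Fin n → FreeGroup (Fin n)),
      (∀ i, ε i = 1 ∨ ε i = -1) ∧
      ∀ i : Fin n, α (FreeGroup.of i) = (w i)⁻¹ * FreeGroup.of (π i) ^ ε i * w i}

open FreeGroup List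

variable {n : ℕ}

/-- flip a letter -/
def li {n : ℕ} (a : Fin n × Bool) : Fin n × Bool := (a.1, !a.2)

@[simp] lemma li_li (a : Fin n × Bool) : li (li a) = a := by simp [li]

@[simp] lemma li_fst (a : Fin n × Bool) : (li a).1 = a.1 := rfl

def Reduced {n : ℕ} (l : List (Fin n × Bool)) : Prop :=
  l.Chain' (fun a b => a.1 = b.1 → a.2 = b.2)

lemma reduced_nil : Reduced ([] : List (Fin n × Bool)) := List.isChain_nil

lemma reduce_eq_of_reduced {l : List (Fin n × Bool)} (h : Reduced l) :
    FreeGroup.reduce l = l := by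
  induction l with
  | nil => rfl
  | cons a l ih =>
    rcases l with _ | ⟨b, l'⟩
    · rfl
    · have hab : a.1 = b.1 → a.2 = b.2 := (List.isChain_cons_cons.1 h).1
      have hR : ¬ (a.1 = b.1 ∧ a.2 = !b.2) := by
        rintro ⟨h1, h2⟩
        have := hab h1
        rw [this] at h2
        exact (Bool.eq_not_self b.2).1 h2
      have hred : Reduced (b :: l') := h.tail
      rw [FreeGroup.reduce.cons, ih hred]
      simp [hR]

lemma reduced_of_reduce_eq {l : List (Fin n × Bool)} (h : FreeGroup.reduce l = l) :
    Reduced l := by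
  induction l with
  | nil => exact List.isChain_nil
  | cons a l ih =>
    rw [FreeGroup.reduce.cons] at h
    rcases hr : FreeGroup.reduce l with _ | ⟨b, l'⟩
    · rw [hr] at h
      simp only [] at h
      have : l = [] := by
        have h2 := congrArg List.length h
        simp at h2
        exact h2
      subst this
      exact List.isChain_singleton a
    · rw [hr] at h
      by_cases hc : a.1 = b.1 ∧ a.2 = !b.2
      · exfalso
        simp only [hc, if_true] at h
        have := congrArg List.length h
        have hle : (FreeGroup.reduce l).length ≤ l.length :=
          (FreeGroup.reduce.red (L := l)).length_le
        rw [hr] at hle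
        simp at this hle
        omega
      · simp only [hc, if_false] at h
        injection h with h1 h2
        have hl : l = b :: l' := h2.symm
        have : Reduced l := ih (hr.trans hl.symm)
        rw [hl]
        refine List.isChain_cons_cons.2 ⟨?_, by rwa [hl] at this⟩
        intro h1'
        by_contra h2'
        exact hc ⟨h1', by revert h2'; cases a.2 <;> cases b.2 <;> simp⟩

lemma reduced_toWord (g : FreeGroup (Fin n)) : Reduced g.toWord :=
  reduced_of_reduce_eq (FreeGroup.reduce_toWord g)

lemma toWord_mk_of_reduced {l : List (Fin n × Bool)} (h : Reduced l) :
    (FreeGroup.mk l).toWord = l := by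
  rw [FreeGroup.toWord_mk, reduce_eq_of_reduced h]

lemma Reduced.suffix {l₁ l₂ : List (Fin n × Bool)} (h : Reduced l₂) (hs : l₁ <:+ l₂) :
    Reduced l₁ := by
  obtain ⟨t, rfl⟩ := hs
  exact (List.isChain_append.1 h).2.1

lemma invRev_cons (a : Fin n × Bool) (l : List (Fin n × Bool)) :
    FreeGroup.invRev (a :: l) = FreeGroup.invRev l ++ [li a] := by
  simp [FreeGroup.invRev, li]

lemma reduced_invRev {l : List (Fin n × Bool)} (h : Reduced l) :
    Reduced (FreeGroup.invRev l) := by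
  unfold FreeGroup.invRev
  unfold Reduced List.Chain'
  rw [List.isChain_reverse]
  refine (List.isChain_map _).2 ?_
  refine h.imp ?_
  rintro ⟨x, bx⟩ ⟨y, yb⟩ hxy
  intro h1
  simp only [li] at h1 ⊢
  have := hxy h1.symm
  have h2 : bx = yb := by simpa using this
  rw [h2]


section Graph

variable (W : Fin n → List (Fin n × Bool))

/-- vertices of the folded lollipop graph: suffixes of the `W i` -/
def InV (s : List (Fin n × Bool)) : Prop := ∃ i, s <:+ W i

/-- reading letter `a` moves from vertex `t` to vertex `s` -/
def GStep (t : List (Fin n × Bool)) (a : Fin n × Bool) (s : List (Fin n × Bool)) : Prop :=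
  InV W t ∧ InV W s ∧
    (t = a :: s ∨ s = li a :: t ∨ (s = t ∧ ∃ i, W i = t ∧ a.1 = i))

/-- reading the word `l` moves from `p` to `q` -/
def Reaches : List (Fin n × Bool) → List (Fin n × Bool) → List (Fin n × Bool) → Prop
  | [], p, q => p = q
  | a :: l, p, q => ∃ r, GStep W p a r ∧ Reaches l r q

variable {W}

lemma InV.reduced (hred : ∀ i, Reduced (W i)) {s} (h : InV W s) : Reduced s := by
  obtain ⟨i, hi⟩ := h
  exact (hred i).suffix hi

section Det

variable (hred : ∀ i, Reduced (W i))
  (hhead : ∀ (i : Fin n) a l, W i = a :: l → a.1 ≠ i)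
  (hno : ∀ (m j : Fin n) (b : Bool), ¬ ((j, b) :: W j <:+ W m))

include hred hhead hno

lemma GStep.det {t a s s'} (h1 : GStep W t a s) (h2 : GStep W t a s') : s = s' := by
  obtain ⟨tV, sV, hc⟩ := h1
  obtain ⟨-, s'V, hc'⟩ := h2
  have parent_child : ∀ u u', t = a :: u → u' = li a :: t → InV W u' → False := by
    intro u u' hp hch hV
    have hru' : Reduced u' := InV.reduced hred hV
    rw [hch, hp] at hru'
    have h2 := (List.isChain_cons_cons.1 hru').1 rfl
    simp [li] at h2
  have parent_loop : ∀ u, t = a :: u → (∃ i, W i = t ∧ a.1 = i) → False := by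
    rintro u hp ⟨i, hWi, hai⟩
    exact hhead i a u (hWi.trans hp) hai
  have child_loop : ∀ u', u' = li a :: t → InV W u' → (∃ i, W i = t ∧ a.1 = i) → False := by
    rintro u' hch hV ⟨i, hWi, hai⟩
    obtain ⟨m, hm⟩ := hV
    apply hno m i (!a.2)
    have hli : li a = (i, !a.2) := by
      rw [← hai]; rfl
    rw [hch, ← hWi, hli] at hm
    exact hm
  rcases hc with hp | hch | ⟨he, hl⟩ <;> rcases hc' with hp' | hch' | ⟨he', hl'⟩
  · rw [hp] at hp'; exact List.cons_injective hp'
  · exact (parent_child s s' hp hch' s'V).elim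
  · exact (parent_loop s hp hl').elim
  · exact (parent_child s' s hp' hch sV).elim
  · rw [hch, hch']
  · exact (child_loop s hch sV hl').elim
  · exact (parent_loop s' hp' hl).elim
  · exact (child_loop s' hch' s'V hl).elim
  · rw [he, he']

end Det

lemma GStep.symm {t a s} (h : GStep W t a s) : GStep W s (li a) t := by
  obtain ⟨tV, sV, hc⟩ := h
  refine ⟨sV, tV, ?_⟩
  rcases hc with hp | hch | ⟨he, i, hWi, hai⟩
  · right; left; rw [li_li]; exact hp
  · left; exact hch
  · right; right
    exact ⟨he.symm, i, by rw [he]; exact hWi, by rw [li_fst]; exact hai⟩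

lemma reaches_append {l₁ l₂ p q} :
    Reaches W (l₁ ++ l₂) p q ↔ ∃ r, Reaches W l₁ p r ∧ Reaches W l₂ r q := by
  induction l₁ generalizing p with
  | nil =>
    simp only [List.nil_append]
    constructor
    · intro h; exact ⟨p, rfl, h⟩
    · rintro ⟨r, hr, h⟩; cases hr; exact h
  | cons a l ih =>
    simp only [List.cons_append]
    constructor
    · rintro ⟨r, hs, h⟩
      obtain ⟨r', h1, h2⟩ := ih.1 h
      exact ⟨r', ⟨r, hs, h1⟩, h2⟩
    · rintro ⟨r', ⟨r, hs, h1⟩, h2⟩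
      exact ⟨r, hs, ih.2 ⟨r', h1, h2⟩⟩

lemma reaches_invRev {l p q} (h : Reaches W l p q) : Reaches W (FreeGroup.invRev l) q p := by
  induction l generalizing p with
  | nil => rw [FreeGroup.invRev_empty]; exact h.symm
  | cons a l ih =>
    obtain ⟨r, hs, hr⟩ := h
    rw [invRev_cons]
    exact reaches_append.2 ⟨r, ih hr, p, hs.symm, rfl⟩

section RedInv

variable (hred : ∀ i, Reduced (W i))
  (hhead : ∀ (i : Fin n) a l, W i = a :: l → a.1 ≠ i)
  (hno : ∀ (m j : Fin n) (b : Bool), ¬ ((j, b) :: W j <:+ W m))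

include hred hhead hno

lemma reaches_red_step {l₁ l₂ p q} (h : FreeGroup.Red.Step l₁ l₂)
    (hr : Reaches W l₁ p q) : Reaches W l₂ p q := by
  rcases h with @⟨A, B, x, b⟩
  obtain ⟨r, hA, hrest⟩ := reaches_append.1 hr
  obtain ⟨r1, hs1, r2, hs2, hB⟩ := hrest
  have hs2' : GStep W r1 (li (x, b)) r := hs1.symm
  have : r2 = r := GStep.det hred hhead hno hs2 hs2'
  exact reaches_append.2 ⟨r, hA, this ▸ hB⟩

lemma reaches_red {l₁ l₂ p q} (h : FreeGroup.Red l₁ l₂)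
    (hr : Reaches W l₁ p q) : Reaches W l₂ p q := by
  induction h with
  | refl => exact hr
  | tail _ hstep ih => exact reaches_red_step hred hhead hno hstep ih

end RedInv

lemma reaches_suffix_path (i : Fin n) : ∀ (s : List (Fin n × Bool)), s <:+ W i →
    Reaches W (FreeGroup.invRev s) [] s := by
  intro s
  induction s with
  | nil => intro _; rw [FreeGroup.invRev_empty]; rfl
  | cons c s' ih =>
    intro hs
    have hs' : s' <:+ W i := (List.suffix_cons c s').trans hs
    rw [invRev_cons]
    refine reaches_append.2 ⟨s', ih hs', c :: s', ?_, rfl⟩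
    refine ⟨⟨i, hs'⟩, ⟨i, hs⟩, ?_⟩
    right; left; rw [li_li]

lemma reaches_u (i : Fin n) :
    Reaches W (FreeGroup.invRev (W i) ++ (i, true) :: W i) [] [] := by
  refine reaches_append.2 ⟨W i, reaches_suffix_path i (W i) (List.suffix_refl _), ?_⟩
  refine ⟨W i, ⟨⟨i, List.suffix_refl _⟩, ⟨i, List.suffix_refl _⟩, ?_⟩, ?_⟩
  · right; right; exact ⟨rfl, i, rfl, rfl⟩
  · have := reaches_invRev (W := W) (reaches_suffix_path i (W i) (List.suffix_refl _))
    rwa [FreeGroup.invRev_invRev] at this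

lemma reduced_lollipop (i : Fin n) (hred : Reduced (W i))
    (hhead : ∀ a l, W i = a :: l → a.1 ≠ i) :
    Reduced (FreeGroup.invRev (W i) ++ (i, true) :: W i) := by
  refine List.isChain_append.2 ⟨reduced_invRev hred, ?_, ?_⟩
  · refine List.isChain_cons.2 ⟨?_, hred⟩
    intro h hh hfst
    rcases hW : W i with _ | ⟨c, l⟩
    · rw [hW] at hh; simp at hh
    · rw [hW] at hh; simp at hh
      subst hh
      exact ((hhead c l hW) hfst.symm).elim
  · intro x hx y hy
    simp only [List.head?_cons, Option.mem_def, Option.some.injEq] at hy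
    subst hy
    rcases hW : W i with _ | ⟨c, l⟩
    · rw [hW] at hx; simp [FreeGroup.invRev] at hx
    · rw [hW, invRev_cons, List.getLast?_concat] at hx
      simp only [Option.mem_def, Option.some.injEq] at hx
      subst hx
      intro hfst
      exact ((hhead c l hW) hfst).elim

lemma w_nil_of_gen (hred : ∀ i, Reduced (W i))
    (hhead : ∀ (i : Fin n) a l, W i = a :: l → a.1 ≠ i)
    (hno : ∀ (m j : Fin n) (b : Bool), ¬ ((j, b) :: W j <:+ W m))
    (hgen : ∀ k : Fin n, FreeGroup.of k ∈ Subgroup.closure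
      (Set.range (fun i => FreeGroup.mk (FreeGroup.invRev (W i) ++ (i, true) :: W i))))
    (k : Fin n) : W k = [] := by
  have hre : Reaches W (FreeGroup.toWord (FreeGroup.of k)) [] [] := by
    refine Subgroup.closure_induction ?_ ?_ ?_ ?_ (hgen k)
    · rintro x ⟨i, rfl⟩
      rw [toWord_mk_of_reduced (reduced_lollipop i (hred i) (hhead i))]
      exact reaches_u i
    · rfl
    · intro x y _ _ hx hy
      have h1 : Reaches W (x.toWord ++ y.toWord) [] [] := reaches_append.2 ⟨[], hx, hy⟩
      have h2 : FreeGroup.Red (x.toWord ++ y.toWord) ((x * y).toWord) := by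
        have hxy : x * y = FreeGroup.mk (x.toWord ++ y.toWord) := by
          rw [← FreeGroup.mul_mk, FreeGroup.mk_toWord, FreeGroup.mk_toWord]
        rw [hxy, FreeGroup.toWord_mk]
        exact FreeGroup.reduce.red
      exact reaches_red hred hhead hno h2 h1
    · intro x _ hx
      rw [FreeGroup.toWord_inv]
      exact reaches_invRev hx
  rw [FreeGroup.toWord_of] at hre
  simp only [Reaches] at hre
  obtain ⟨r, hs, hr⟩ := hre
  have hr' : r = [] := hr
  subst hr'
  obtain ⟨-, -, hc⟩ := hs
  rcases hc with h | h | ⟨-, i, hWi, hik⟩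
  · exact absurd h (by simp)
  · exact absurd h (by simp)
  · have hki : k = i := hik
    rw [hki]; exact hWi

end Graph

section NF

lemma mk_single_true (i : Fin n) : FreeGroup.mk [(i, true)] = FreeGroup.of i := rfl

lemma mk_single_false (i : Fin n) : FreeGroup.mk [(i, false)] = (FreeGroup.of i)⁻¹ := by
  rw [← mk_single_true, FreeGroup.inv_mk]
  simp [FreeGroup.invRev]

lemma aut_ext {f g : MulAut (FreeGroup (Fin n))}
    (h : ∀ a : Fin n, f (FreeGroup.of a) = g (FreeGroup.of a)) : f = g := by
  apply MulEquiv.toMonoidHom_injective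
  exact FreeGroup.ext_hom _ _ h

lemma conj_zpow_eq (a g : FreeGroup (Fin n)) (m : ℤ) :
    (a⁻¹ * g * a) ^ m = a⁻¹ * g ^ m * a := by
  have : a⁻¹ * g * a = (MulAut.conj a⁻¹) g := by
    simp [MulAut.conj]
  rw [this, ← map_zpow]
  simp [MulAut.conj]

lemma exists_normal_form (i : Fin n) (v : FreeGroup (Fin n)) :
    ∃ Wd : List (Fin n × Bool), Reduced Wd ∧ (∀ a l, Wd = a :: l → a.1 ≠ i) ∧
      v⁻¹ * FreeGroup.of i * v = FreeGroup.mk (FreeGroup.invRev Wd ++ (i, true) :: Wd) := by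
  suffices h : ∀ (N : ℕ) (v : FreeGroup (Fin n)), FreeGroup.norm v ≤ N →
      ∃ Wd : List (Fin n × Bool), Reduced Wd ∧ (∀ a l, Wd = a :: l → a.1 ≠ i) ∧
      v⁻¹ * FreeGroup.of i * v = FreeGroup.mk (FreeGroup.invRev Wd ++ (i, true) :: Wd) from
    h (FreeGroup.norm v) v le_rfl
  intro N
  induction N with
  | zero =>
    intro v hv
    have : v = 1 := by
      have h0 : v.toWord.length = 0 := le_antisymm hv (Nat.zero_le _)
      have : v.toWord = [] := List.length_eq_zero_iff.1 h0
      rw [← FreeGroup.mk_toWord (x := v), this]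
      rfl
    subst this
    refine ⟨[], reduced_nil, by simp, ?_⟩
    simp [mk_single_true]
  | succ N ih =>
    intro v hv
    rcases hW : v.toWord with _ | ⟨⟨j, b⟩, rest⟩
    · refine ⟨[], reduced_nil, by simp, ?_⟩
      have : v = 1 := by
        rw [← FreeGroup.mk_toWord (x := v), hW]; rfl
      subst this
      simp [mk_single_true]
    · by_cases hji : j = i
      · subst hji
        set v' := FreeGroup.mk rest with hv'
        have hrest : Reduced rest := by
          have hh := reduced_toWord v
          rw [hW] at hh
          exact hh.tail
        have htv' : v'.toWord = rest := toWord_mk_of_reduced hrest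
        have hnorm : FreeGroup.norm v' ≤ N := by
          have : FreeGroup.norm v = rest.length + 1 := by
            rw [FreeGroup.norm, hW]; simp
          rw [FreeGroup.norm, htv']
          omega
        have hsplit : v = FreeGroup.mk [(j, b)] * v' := by
          rw [hv', FreeGroup.mul_mk, List.singleton_append, ← hW, FreeGroup.mk_toWord]
        have hconj : v⁻¹ * FreeGroup.of j * v = v'⁻¹ * FreeGroup.of j * v' := by
          rw [hsplit]
          cases b
          · rw [mk_single_false]
            group
          · rw [mk_single_true]
            group
        rw [hconj]
        exact ih v' hnorm
      · refine ⟨v.toWord, reduced_toWord v, ?_, ?_⟩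
        · intro a l hal
          rw [hW] at hal
          injection hal with h1 h2
          rw [← h1]
          exact hji
        · have hv2 : v = FreeGroup.mk v.toWord := (FreeGroup.mk_toWord).symm
          conv_lhs => rw [hv2]
          rw [show ((i, true) :: v.toWord) = [(i, true)] ++ v.toWord from rfl]
          rw [← FreeGroup.mul_mk, ← FreeGroup.mul_mk, ← FreeGroup.inv_mk, mk_single_true, mul_assoc]

end NF

section Part1

lemma xg_nat {i : ℕ} (h : i < n) : xg n i = FreeGroup.of (⟨i, h⟩ : Fin n) := dif_pos h

lemma xg_val (k : Fin n) : xg n k.val = FreeGroup.of k := by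
  rw [xg_nat k.isLt]

lemma one_mem_pcstar : (1 : MulAut (FreeGroup (Fin n))) ∈ PCStarSet n :=
  ⟨1, fun _ => 1, fun _ => 1, fun _ => Or.inl rfl, fun i => by simp⟩

lemma mul_mem_pcstar {α β : MulAut (FreeGroup (Fin n))}
    (hα : α ∈ PCStarSet n) (hβ : β ∈ PCStarSet n) : α * β ∈ PCStarSet n := by
  obtain ⟨π, ε, w, hε, hw⟩ := hα
  obtain ⟨π', ε', w', hε', hw'⟩ := hβ
  refine ⟨π'.trans π, fun i => ε (π' i) * ε' i, fun i => w (π' i) * α (w' i), ?_, ?_⟩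
  · intro i; rcases hε (π' i) with h | h <;> rcases hε' i with h' | h' <;> simp [h, h']
  · intro i
    have hab : (α * β) (FreeGroup.of i) = α (β (FreeGroup.of i)) := rfl
    rw [hab, hw' i]
    simp only [_root_.map_mul, _root_.map_inv, _root_.map_zpow]
    rw [hw (π' i), conj_zpow_eq, ← zpow_mul]
    simp [Equiv.trans_apply, mul_inv_rev, mul_assoc]

lemma inv_apply_apply (α : MulAut (FreeGroup (Fin n))) (x : FreeGroup (Fin n)) :
    α⁻¹ (α x) = x := by
  rw [MulAut.inv_def]; exact α.symm_apply_apply x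

lemma inv_mem_pcstar {α : MulAut (FreeGroup (Fin n))}
    (hα : α ∈ PCStarSet n) : α⁻¹ ∈ PCStarSet n := by
  obtain ⟨π, ε, w, hε, hw⟩ := hα
  refine ⟨π.symm, fun k => ε (π.symm k), fun k => (α⁻¹ (w (π.symm k)))⁻¹, fun k => hε _, ?_⟩
  intro k
  show α⁻¹ (FreeGroup.of k) =
    ((α⁻¹ (w (π.symm k)))⁻¹)⁻¹ * FreeGroup.of (π.symm k) ^ ε (π.symm k) * (α⁻¹ (w (π.symm k)))⁻¹
  set i := π.symm k with hi
  have hπk : π i = k := Equiv.apply_symm_apply π k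
  have h2 : FreeGroup.of i = α⁻¹ ((w i)⁻¹ * FreeGroup.of (π i) ^ ε i * w i) := by
    rw [← hw i, inv_apply_apply]
  rw [hπk] at h2
  simp only [_root_.map_mul, _root_.map_inv, _root_.map_zpow] at h2
  rcases hε i with h | h
  · rw [h] at h2 ⊢
    simp only [zpow_one] at h2 ⊢
    rw [h2]
    group
  · rw [h] at h2 ⊢
    rw [h2]
    group

def pcSubgroup (n : ℕ) : Subgroup (MulAut (FreeGroup (Fin n))) where
  carrier := PCStarSet n
  one_mem' := one_mem_pcstar
  mul_mem' := mul_mem_pcstar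
  inv_mem' := inv_mem_pcstar

lemma sigma_mem_pcstar {i : ℕ} (hi : i + 1 < n) {s : MulAut (FreeGroup (Fin n))}
    (hs : IsSigma n i s) : s ∈ PCStarSet n := by
  have hi0 : i < n := by omega
  set a : Fin n := ⟨i, hi0⟩ with ha
  set b : Fin n := ⟨i + 1, hi⟩ with hb
  have hab : a ≠ b := by
    simp [ha, hb, Fin.ext_iff]
  obtain ⟨h1, h2, h3⟩ := hs
  rw [xg_nat hi0, xg_nat hi] at h1 h2
  refine ⟨Equiv.swap a b, fun _ => 1, fun k => if k = b then FreeGroup.of b else 1, fun _ => Or.inl rfl, ?_⟩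
  intro k
  by_cases hka : k = a
  · subst hka
    simp [ha, hb, Equiv.swap_apply_left, hab, h1]
  · by_cases hkb : k = b
    · subst hkb
      simp [ha, hb, Equiv.swap_apply_right, h2, mul_assoc]
    · have hv1 : k.val ≠ i := fun h => hka (Fin.ext h)
      have hv2 : k.val ≠ i + 1 := fun h => hkb (Fin.ext h)
      have := h3 k.val k.isLt hv1 hv2
      rw [xg_val] at this
      simp [Equiv.swap_apply_of_ne_of_ne hka hkb, this, hkb]

lemma rho_mem_pcstar {i : ℕ} (hi : i + 1 < n) {r : MulAut (FreeGroup (Fin n))}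
    (hr : IsRho n i r) : r ∈ PCStarSet n := by
  have hi0 : i < n := by omega
  set a : Fin n := ⟨i, hi0⟩ with ha
  set b : Fin n := ⟨i + 1, hi⟩ with hb
  obtain ⟨h1, h2, h3⟩ := hr
  rw [xg_nat hi0, xg_nat hi] at h1 h2
  refine ⟨Equiv.swap a b, fun _ => 1, fun _ => 1, fun _ => Or.inl rfl, ?_⟩
  intro k
  by_cases hka : k = a
  · subst hka
    simp [ha, hb, Equiv.swap_apply_left, h1]
  · by_cases hkb : k = b
    · subst hkb
      simp [ha, hb, Equiv.swap_apply_right, h2]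
    · have hv1 : k.val ≠ i := fun h => hka (Fin.ext h)
      have hv2 : k.val ≠ i + 1 := fun h => hkb (Fin.ext h)
      have := h3 k.val k.isLt hv1 hv2
      rw [xg_val] at this
      simp [Equiv.swap_apply_of_ne_of_ne hka hkb, this]

lemma tau_mem_pcstar {i : ℕ} (hi : i < n) {t : MulAut (FreeGroup (Fin n))}
    (ht : IsTau n i t) : t ∈ PCStarSet n := by
  set a : Fin n := ⟨i, hi⟩ with ha
  obtain ⟨h1, h2⟩ := ht
  rw [xg_nat hi] at h1
  refine ⟨1, fun k => if k = a then -1 else 1, fun _ => 1, ?_, ?_⟩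
  · intro k
    by_cases h : k = a <;> simp [h]
  · intro k
    by_cases hka : k = a
    · subst hka
      simp [ha, h1]
    · have hv1 : k.val ≠ i := fun h => hka (Fin.ext h)
      have := h2 k.val k.isLt hv1
      rw [xg_val] at this
      simp [this, hka]

end Part1

section Part2

def genSet (n : ℕ) (σ ρ τ : ℕ → MulAut (FreeGroup (Fin n))) : Set (MulAut (FreeGroup (Fin n))) :=
  {g | ∃ i, i + 1 < n ∧ g = σ i} ∪ {g | ∃ i, i + 1 < n ∧ g = ρ i} ∪ {g | ∃ i, i < n ∧ g = τ i}

variable {σ ρ τ : ℕ → MulAut (FreeGroup (Fin n))}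

lemma sigma_mem_closure {i : ℕ} (hi : i + 1 < n) :
    σ i ∈ Subgroup.closure (genSet n σ ρ τ) :=
  Subgroup.subset_closure (Or.inl (Or.inl ⟨i, hi, rfl⟩))

lemma rho_mem_closure {i : ℕ} (hi : i + 1 < n) :
    ρ i ∈ Subgroup.closure (genSet n σ ρ τ) :=
  Subgroup.subset_closure (Or.inl (Or.inr ⟨i, hi, rfl⟩))

lemma tau_mem_closure {i : ℕ} (hi : i < n) :
    τ i ∈ Subgroup.closure (genSet n σ ρ τ) :=
  Subgroup.subset_closure (Or.inr ⟨i, hi, rfl⟩)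

/-- the subgroup of permutations realized by closure elements -/
def realizedPerms (n : ℕ) (σ ρ τ : ℕ → MulAut (FreeGroup (Fin n))) : Subgroup (Equiv.Perm (Fin n)) where
  carrier := {π | ∃ β ∈ Subgroup.closure (genSet n σ ρ τ),
    ∀ i, β (FreeGroup.of i) = FreeGroup.of (π i)}
  one_mem' := ⟨1, Subgroup.one_mem _, fun i => rfl⟩
  mul_mem' := by
    rintro π₁ π₂ ⟨β₁, hβ₁, h1⟩ ⟨β₂, hβ₂, h2⟩
    refine ⟨β₁ * β₂, Subgroup.mul_mem _ hβ₁ hβ₂, fun i => ?_⟩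
    have : (β₁ * β₂) (FreeGroup.of i) = β₁ (β₂ (FreeGroup.of i)) := rfl
    rw [this, h2, h1]
    rfl
  inv_mem' := by
    rintro π ⟨β, hβ, h⟩
    refine ⟨β⁻¹, Subgroup.inv_mem _ hβ, fun k => ?_⟩
    have := h (π⁻¹ k)
    rw [show π (π⁻¹ k) = k from Equiv.apply_symm_apply π k] at this
    rw [← this, inv_apply_apply]

lemma adj_swap_mem_realized (hρ : ∀ i, i + 1 < n → IsRho n i (ρ i))
    {i : ℕ} (hi : i + 1 < n) :
    Equiv.swap (⟨i, by omega⟩ : Fin n) ⟨i + 1, hi⟩ ∈ realizedPerms n σ ρ τ := by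
  set a : Fin n := ⟨i, by omega⟩
  set b : Fin n := ⟨i + 1, hi⟩
  obtain ⟨h1, h2, h3⟩ := hρ i hi
  rw [xg_nat (show i < n by omega), xg_nat hi] at h1 h2
  refine ⟨ρ i, rho_mem_closure hi, fun k => ?_⟩
  by_cases hka : k = a
  · subst hka; rw [h1, Equiv.swap_apply_left]
  · by_cases hkb : k = b
    · subst hkb; rw [h2, Equiv.swap_apply_right]
    · have hv1 : k.val ≠ i := fun h => hka (Fin.ext h)
      have hv2 : k.val ≠ i + 1 := fun h => hkb (Fin.ext h)
      have := h3 k.val k.isLt hv1 hv2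
      rw [xg_val] at this
      rw [this, Equiv.swap_apply_of_ne_of_ne hka hkb]

lemma swap_eq_swap_of_eq {u v a b : Fin n} (h1 : u = a) (h2 : v = b) :
    Equiv.swap u v = Equiv.swap a b := by rw [h1, h2]

lemma swap_mem_realized (hρ : ∀ i, i + 1 < n → IsRho n i (ρ i)) :
    ∀ (d : ℕ) (u v : Fin n), u.val < v.val → v.val - u.val ≤ d →
      Equiv.swap u v ∈ realizedPerms n σ ρ τ := by
  intro d
  induction d with
  | zero => intro u v h1 h2; omega
  | succ d ih =>
    intro u v h1 h2
    by_cases hadj : v.val = u.val + 1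
    · have hv : u.val + 1 < n := hadj ▸ v.isLt
      rw [swap_eq_swap_of_eq (show u = (⟨u.val, by omega⟩ : Fin n) from Fin.ext rfl)
        (show v = (⟨u.val + 1, hv⟩ : Fin n) from Fin.ext hadj)]
      exact adj_swap_mem_realized hρ hv
    · set m : Fin n := ⟨v.val - 1, by omega⟩ with hm
      have hum : u.val < m.val := by simp [hm]; omega
      have hmv : m.val < v.val := by simp [hm]; omega
      have hmv1 : m.val + 1 < n := by have := v.isLt; simp [hm]; omega
      have hswmv : Equiv.swap m v ∈ realizedPerms n σ ρ τ := by
        rw [swap_eq_swap_of_eq (show m = (⟨m.val, by omega⟩ : Fin n) from Fin.ext rfl)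
          (show v = (⟨m.val + 1, hmv1⟩ : Fin n) from Fin.ext (by simp [hm]; omega))]
        exact adj_swap_mem_realized hρ hmv1
      have hswum : Equiv.swap u m ∈ realizedPerms n σ ρ τ := by
        apply ih u m hum; omega
      have hune : u ≠ m := by intro h; rw [h] at hum; omega
      have hunv : u ≠ v := by intro h; rw [h] at h1; omega
      have hkey : Equiv.swap u v = Equiv.swap m v * Equiv.swap u m * (Equiv.swap m v)⁻¹ := by
        rw [← Equiv.swap_apply_apply]
        congr 1
        · rw [Equiv.swap_apply_of_ne_of_ne hune hunv]
        · rw [Equiv.swap_apply_left]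
      rw [hkey]
      exact Subgroup.mul_mem _ (Subgroup.mul_mem _ hswmv hswum) (Subgroup.inv_mem _ hswmv)

lemma realized_eq_top (hρ : ∀ i, i + 1 < n → IsRho n i (ρ i)) :
    realizedPerms n σ ρ τ = ⊤ := by
  rw [eq_top_iff, ← Equiv.Perm.closure_isSwap, Subgroup.closure_le]
  rintro π ⟨x, y, hxy, rfl⟩
  rcases lt_trichotomy x.val y.val with h | h | h
  · exact swap_mem_realized hρ (y.val - x.val) x y h le_rfl
  · exact absurd (Fin.ext h) hxy
  · rw [Equiv.swap_comm]
    exact swap_mem_realized hρ (x.val - y.val) y x h le_rfl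

lemma exists_perm_realize (hρ : ∀ i, i + 1 < n → IsRho n i (ρ i)) (π : Equiv.Perm (Fin n)) :
    ∃ β ∈ Subgroup.closure (genSet n σ ρ τ),
      ∀ i, β (FreeGroup.of i) = FreeGroup.of (π i) := by
  have : π ∈ realizedPerms n σ ρ τ := by rw [realized_eq_top hρ]; trivial
  exact this

section SignsConj

variable {σ ρ τ : ℕ → MulAut (FreeGroup (Fin n))}

lemma tau_of (hτ : ∀ i, i < n → IsTau n i (τ i)) (a k : Fin n) :
    τ a.val (FreeGroup.of k) =
      if k = a then (FreeGroup.of a)⁻¹ else FreeGroup.of k := by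
  obtain ⟨h1, h2⟩ := hτ a.val a.isLt
  rw [xg_val] at h1
  by_cases hk : k = a
  · subst hk; simp [h1]
  · have hv : k.val ≠ a.val := fun h => hk (Fin.ext h)
    have := h2 k.val k.isLt hv
    rw [xg_val] at this
    simp [hk, this]

lemma list_tau_action (hτ : ∀ i, i < n → IsTau n i (τ i)) (l : List (Fin n)) (hnd : l.Nodup) :
    ∀ k, (l.map (fun i => τ i.val)).prod (FreeGroup.of k) =
      if k ∈ l then (FreeGroup.of k)⁻¹ else FreeGroup.of k := by
  induction l with
  | nil => intro k; simp
  | cons a l ih =>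
    intro k
    have hal : a ∉ l := (List.nodup_cons.1 hnd).1
    have hnd' : l.Nodup := (List.nodup_cons.1 hnd).2
    rw [List.map_cons, List.prod_cons]
    have happ : (τ a.val * (l.map (fun i => τ i.val)).prod) (FreeGroup.of k)
        = τ a.val ((l.map (fun i => τ i.val)).prod (FreeGroup.of k)) := rfl
    rw [happ, ih hnd' k]
    by_cases hkl : k ∈ l
    · have hka : k ≠ a := fun h => hal (h ▸ hkl)
      rw [if_pos hkl, if_pos (List.mem_cons.2 (Or.inr hkl)), _root_.map_inv, tau_of hτ a k,
        if_neg hka]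
    · by_cases hka : k = a
      · rw [if_neg hkl, tau_of hτ a k, if_pos hka, if_pos (List.mem_cons.2 (Or.inl hka)), hka]
      · rw [if_neg hkl, tau_of hτ a k, if_neg hka,
          if_neg (fun h => (List.mem_cons.1 h).elim hka hkl)]

lemma exists_sign_aut (hτ : ∀ i, i < n → IsTau n i (τ i)) (ε : Fin n → ℤ)
    (hε : ∀ i, ε i = 1 ∨ ε i = -1) :
    ∃ t ∈ Subgroup.closure (genSet n σ ρ τ),
      (∀ k, t (FreeGroup.of k) = FreeGroup.of k ^ ε k) ∧ t * t = 1 := by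
  classical
  set l : List (Fin n) := (Finset.univ.filter (fun i => ε i = -1)).toList with hl
  have hnd : l.Nodup := Finset.nodup_toList _
  have hmem : ∀ k, k ∈ l ↔ ε k = -1 := by
    intro k
    rw [hl, Finset.mem_toList, Finset.mem_filter]
    simp
  set t : MulAut (FreeGroup (Fin n)) := (l.map (fun i => τ i.val)).prod with ht
  have haction : ∀ k, t (FreeGroup.of k) = if k ∈ l then (FreeGroup.of k)⁻¹ else FreeGroup.of k :=
    list_tau_action hτ l hnd
  refine ⟨t, ?_, ?_, ?_⟩
  · apply Subgroup.list_prod_mem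
    intro x hx
    obtain ⟨i, _, rfl⟩ := List.mem_map.1 hx
    exact tau_mem_closure i.isLt
  · intro k
    rw [haction k]
    by_cases hk : k ∈ l
    · rw [if_pos hk, (hmem k).1 hk]
      simp
    · have : ε k = 1 := (hε k).resolve_right (fun h => hk ((hmem k).2 h))
      rw [if_neg hk, this, zpow_one]
  · apply aut_ext
    intro a
    have happ : (t * t) (FreeGroup.of a) = t (t (FreeGroup.of a)) := rfl
    rw [happ, haction a]
    by_cases hk : a ∈ l
    · rw [if_pos hk, _root_.map_inv, haction a, if_pos hk]
      simp
    · rw [if_neg hk, haction a, if_neg hk]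
      rfl

/-- the letter `(j, b)` as a group element -/
def cg (j : Fin n) : Bool → FreeGroup (Fin n)
  | true => FreeGroup.of j
  | false => (FreeGroup.of j)⁻¹

@[simp] lemma cg_true (j : Fin n) : cg j true = FreeGroup.of j := rfl
@[simp] lemma cg_false (j : Fin n) : cg j false = (FreeGroup.of j)⁻¹ := rfl

lemma cg_eq_mk (j : Fin n) (b : Bool) : cg j b = FreeGroup.mk [(j, b)] := by
  cases b
  · rw [cg_false, mk_single_false]
  · rw [cg_true, mk_single_true]

lemma exists_conj_aut (hσ : ∀ i, i + 1 < n → IsSigma n i (σ i))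
    (hρ : ∀ i, i + 1 < n → IsRho n i (ρ i))
    (h2 : 1 < n) (m j : Fin n) (hmj : m ≠ j) (b : Bool) :
    ∃ A ∈ Subgroup.closure (genSet n σ ρ τ),
      (A (FreeGroup.of m) = (cg j b)⁻¹ * FreeGroup.of m * cg j b) ∧
      ∀ k, k ≠ m → A (FreeGroup.of k) = FreeGroup.of k := by
  set a : Fin n := ⟨0, by omega⟩ with haa
  set a1 : Fin n := ⟨1, h2⟩ with ha1
  have haa1 : a ≠ a1 := by simp [haa, ha1, Fin.ext_iff]
  obtain ⟨hs1, hs2, hs3⟩ := hσ 0 h2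
  obtain ⟨hr1, hr2, hr3⟩ := hρ 0 h2
  rw [xg_nat (show 0 < n by omega), xg_nat h2] at hs1 hs2 hr1 hr2
  set A0 : MulAut (FreeGroup (Fin n)) := σ 0 * ρ 0 with hA0
  have hA0mem : A0 ∈ Subgroup.closure (genSet n σ ρ τ) :=
    Subgroup.mul_mem _ (sigma_mem_closure h2) (rho_mem_closure h2)
  have hA0a : A0 (FreeGroup.of a) = (FreeGroup.of a1)⁻¹ * FreeGroup.of a * FreeGroup.of a1 := by
    have h : A0 (FreeGroup.of a) = σ 0 (ρ 0 (FreeGroup.of a)) := rfl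
    rw [h, hr1, hs2]
  have hA0fix : ∀ k, k ≠ a → A0 (FreeGroup.of k) = FreeGroup.of k := by
    intro k hk
    have happ : A0 (FreeGroup.of k) = σ 0 (ρ 0 (FreeGroup.of k)) := rfl
    by_cases hk1 : k = a1
    · subst hk1
      rw [happ, hr2, hs1]
    · have hv1 : k.val ≠ 0 := fun h => hk (Fin.ext h)
      have hv2 : k.val ≠ 1 := fun h => hk1 (Fin.ext h)
      have e1 := hr3 k.val k.isLt hv1 hv2
      have e2 := hs3 k.val k.isLt hv1 hv2
      rw [xg_val] at e1 e2
      rw [happ, e1, e2]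
  have hbase : ∀ b : Bool, ∃ B ∈ Subgroup.closure (genSet n σ ρ τ),
      (B (FreeGroup.of a) = (cg a1 b)⁻¹ * FreeGroup.of a * cg a1 b) ∧
      ∀ k, k ≠ a → B (FreeGroup.of k) = FreeGroup.of k := by
    intro b
    cases b
    · refine ⟨A0⁻¹, Subgroup.inv_mem _ hA0mem, ?_, ?_⟩
      · have key : A0 (FreeGroup.of a1 * FreeGroup.of a * (FreeGroup.of a1)⁻¹)
            = FreeGroup.of a := by
          rw [_root_.map_mul, _root_.map_mul, _root_.map_inv, hA0a, hA0fix a1 haa1.symm]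
          group
        have h6 : A0⁻¹ (A0 (FreeGroup.of a1 * FreeGroup.of a * (FreeGroup.of a1)⁻¹))
            = A0⁻¹ (FreeGroup.of a) := by rw [key]
        rw [inv_apply_apply] at h6
        rw [← h6, cg_false]
        group
      · intro k hk
        have h6 : A0⁻¹ (A0 (FreeGroup.of k)) = A0⁻¹ (FreeGroup.of k) := by
          rw [hA0fix k hk]
        rw [inv_apply_apply] at h6
        rw [← h6]
    · refine ⟨A0, hA0mem, ?_, hA0fix⟩
      rw [hA0a, cg_true]
  obtain ⟨B, hBmem, hBa, hBfix⟩ := hbase b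
  set c : Equiv.Perm (Fin n) := Equiv.swap a m with hc
  set dd : Equiv.Perm (Fin n) := Equiv.swap a1 (c j) with hd
  set π : Equiv.Perm (Fin n) := dd.trans c with hπ
  have hπa : π a = m := by
    have hda : dd a = a := by
      apply Equiv.swap_apply_of_ne_of_ne haa1
      intro h
      have h7 : c (c j) = c a := by rw [h]
      rw [Equiv.swap_apply_self] at h7
      rw [h7] at hmj
      exact hmj (by rw [Equiv.swap_apply_left])
    show c (dd a) = m
    rw [hda, Equiv.swap_apply_left]
  have hπa1 : π a1 = j := by
    show c (dd a1) = j
    rw [hd, Equiv.swap_apply_left, Equiv.swap_apply_self]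
  obtain ⟨β, hβmem, hβ⟩ := exists_perm_realize (σ := σ) (τ := τ) hρ π
  have hβinv : ∀ k : Fin n, β⁻¹ (FreeGroup.of k) = FreeGroup.of (π.symm k) := by
    intro k
    have h5 := hβ (π.symm k)
    rw [Equiv.apply_symm_apply] at h5
    rw [← h5, inv_apply_apply]
  refine ⟨β * B * β⁻¹, Subgroup.mul_mem _ (Subgroup.mul_mem _ hβmem hBmem)
    (Subgroup.inv_mem _ hβmem), ?_, ?_⟩
  · have hsymm_m : π.symm m = a := by
      rw [← hπa, Equiv.symm_apply_apply]
    have happ : (β * B * β⁻¹) (FreeGroup.of m) = β (B (β⁻¹ (FreeGroup.of m))) := rfl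
    rw [happ, hβinv m, hsymm_m, hBa]
    cases b
    · rw [cg_false, cg_false]
      simp only [_root_.map_mul, _root_.map_inv]
      rw [hβ a1, hβ a, hπa1, hπa]
    · rw [cg_true, cg_true]
      simp only [_root_.map_mul, _root_.map_inv]
      rw [hβ a1, hβ a, hπa1, hπa]
  · intro k hk
    have hπk : π.symm k ≠ a := by
      intro h
      have h8 : π (π.symm k) = π a := by rw [h]
      rw [Equiv.apply_symm_apply, hπa] at h8
      exact hk h8
    have happ : (β * B * β⁻¹) (FreeGroup.of k) = β (B (β⁻¹ (FreeGroup.of k))) := rfl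
    rw [happ, hβinv k, hBfix _ hπk, hβ, Equiv.apply_symm_apply]

end SignsConj

section Pure

variable {σ ρ τ : ℕ → MulAut (FreeGroup (Fin n))}

lemma mk_lollipop_eq (i : Fin n) (Wd : List (Fin n × Bool)) :
    FreeGroup.mk (FreeGroup.invRev Wd ++ (i, true) :: Wd)
      = (FreeGroup.mk Wd)⁻¹ * FreeGroup.of i * FreeGroup.mk Wd := by
  rw [show ((i, true) :: Wd) = [(i, true)] ++ Wd from rfl, ← FreeGroup.mul_mk,
    ← FreeGroup.mul_mk, ← FreeGroup.inv_mk, mk_single_true]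
  rw [mul_assoc]

lemma apply_inv_apply (α : MulAut (FreeGroup (Fin n))) (x : FreeGroup (Fin n)) :
    α (α⁻¹ x) = x := by
  rw [MulAut.inv_def]; exact α.apply_symm_apply x

lemma cg_mul_cg_not (j : Fin n) (b : Bool) : cg j (!b) = (cg j b)⁻¹ := by
  cases b <;> simp

lemma pure_mem_closure (hσ : ∀ i, i + 1 < n → IsSigma n i (σ i))
    (hρ : ∀ i, i + 1 < n → IsRho n i (ρ i)) :
    ∀ (δ : MulAut (FreeGroup (Fin n))),
    (∀ i : Fin n, ∃ v, δ (FreeGroup.of i) = v⁻¹ * FreeGroup.of i * v) →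
    δ ∈ Subgroup.closure (genSet n σ ρ τ) := by
  suffices h : ∀ (μ : ℕ) (δ : MulAut (FreeGroup (Fin n))),
      (∀ i : Fin n, ∃ v, δ (FreeGroup.of i) = v⁻¹ * FreeGroup.of i * v) →
      (∑ i : Fin n, FreeGroup.norm (δ (FreeGroup.of i))) = μ →
      δ ∈ Subgroup.closure (genSet n σ ρ τ) by
    intro δ hpure
    exact h _ δ hpure rfl
  intro μ
  induction μ using Nat.strong_induction_on with
  | _ μ ih =>
  intro δ hpure hμ
  have hWex : ∀ i : Fin n, ∃ Wd, Reduced Wd ∧ (∀ a l, Wd = a :: l → a.1 ≠ i) ∧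
      δ (FreeGroup.of i) = FreeGroup.mk (FreeGroup.invRev Wd ++ (i, true) :: Wd) := by
    intro i
    obtain ⟨v, hv⟩ := hpure i
    obtain ⟨Wd, h1, h2, h3⟩ := exists_normal_form i v
    exact ⟨Wd, h1, h2, by rw [hv, h3]⟩
  choose W hred hhead hu using hWex
  by_cases hall : ∀ i, W i = []
  · have : δ = 1 := by
      apply aut_ext
      intro a
      rw [hu a, hall a]
      show FreeGroup.mk (FreeGroup.invRev [] ++ [(a, true)]) = _
      rw [FreeGroup.invRev_empty, List.nil_append, mk_single_true]
      rfl
    rw [this]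
    exact Subgroup.one_mem _
  · push_neg at hall
    obtain ⟨k, hk⟩ := hall
    -- the folding argument produces a descent pattern
    have hpat : ∃ (m jj : Fin n) (b : Bool), ((jj, b) :: W jj) <:+ W m := by
      by_contra hno
      push_neg at hno
      apply hk
      apply w_nil_of_gen hred hhead (fun m j b => hno m j b) ?_ k
      intro k'
      have hg : δ⁻¹ (FreeGroup.of k') ∈
          Subgroup.closure (Set.range (FreeGroup.of (α := Fin n))) := by
        rw [FreeGroup.closure_range_of]; trivial
      have hmap := Subgroup.mem_map_of_mem (δ : FreeGroup (Fin n) →* FreeGroup (Fin n)) hg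
      rw [MonoidHom.map_closure] at hmap
      have hco : ((δ : FreeGroup (Fin n) →* FreeGroup (Fin n)) : FreeGroup (Fin n) → FreeGroup (Fin n)) = ⇑δ := rfl
      rw [hco] at hmap
      rw [apply_inv_apply] at hmap
      have hrange : ⇑δ '' Set.range (FreeGroup.of (α := Fin n)) =
          Set.range (fun i => FreeGroup.mk (FreeGroup.invRev (W i) ++ (i, true) :: W i)) := by
        rw [← Set.range_comp]
        exact congrArg Set.range (funext fun i => hu i)
      rw [hrange] at hmap
      exact hmap
    obtain ⟨m, jj, b, hsuf⟩ := hpat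
    have hmj : m ≠ jj := by
      intro h
      subst h
      have := List.IsSuffix.length_le hsuf
      rw [List.length_cons] at this
      omega
    have h2 : 1 < n := by
      by_contra hle
      push_neg at hle
      have hm0 : m.val = 0 := by have := m.isLt; omega
      have hj0 : jj.val = 0 := by have := jj.isLt; omega
      exact hmj (Fin.ext (hm0.trans hj0.symm))
    obtain ⟨q, hq⟩ := hsuf
    obtain ⟨A, hAmem, hAm, hAfix⟩ := exists_conj_aut (τ := τ) hσ hρ h2 m jj hmj (!b)
    set P : FreeGroup (Fin n) := FreeGroup.mk (W jj) with hP
    set Q : FreeGroup (Fin n) := FreeGroup.mk q with hQ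
    have hVm : FreeGroup.mk (W m) = Q * cg jj b * P := by
      rw [← hq, show ((jj, b) :: W jj) = [(jj, b)] ++ W jj from rfl, ← FreeGroup.mul_mk,
        ← FreeGroup.mul_mk, ← cg_eq_mk, ← mul_assoc]
    have hδc : ∀ b' : Bool, δ (cg jj b') = P⁻¹ * cg jj b' * P := by
      intro b'
      cases b'
      · rw [cg_false, _root_.map_inv, hu jj, mk_lollipop_eq, ← hP]
        group
      · rw [cg_true, hu jj, mk_lollipop_eq, ← hP]
    set δ' : MulAut (FreeGroup (Fin n)) := δ * A with hδ'
    have hδ'fix : ∀ i : Fin n, i ≠ m → δ' (FreeGroup.of i) = δ (FreeGroup.of i) := by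
      intro i hi
      have happ : δ' (FreeGroup.of i) = δ (A (FreeGroup.of i)) := rfl
      rw [happ, hAfix i hi]
    have hδ'm : δ' (FreeGroup.of m) =
        (Q * P)⁻¹ * FreeGroup.of m * (Q * P) := by
      have happ : δ' (FreeGroup.of m) = δ (A (FreeGroup.of m)) := rfl
      rw [happ, hAm]
      simp only [_root_.map_mul, _root_.map_inv]
      rw [hδc, hu m, mk_lollipop_eq, hVm, cg_mul_cg_not]
      group
    have hpure' : ∀ i : Fin n, ∃ v, δ' (FreeGroup.of i) = v⁻¹ * FreeGroup.of i * v := by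
      intro i
      by_cases hi : i = m
      · subst hi
        exact ⟨Q * P, hδ'm⟩
      · rw [hδ'fix i hi]
        exact hpure i
    have hlenm : FreeGroup.norm (δ (FreeGroup.of m)) = 2 * (W m).length + 1 := by
      rw [hu m, FreeGroup.norm, toWord_mk_of_reduced (reduced_lollipop m (hred m) (hhead m))]
      rw [List.length_append, FreeGroup.invRev_length]
      simp
      omega
    have hqlen : (W m).length = q.length + 1 + (W jj).length := by
      rw [← hq]
      simp
      omega
    have hlt : FreeGroup.norm (δ' (FreeGroup.of m)) < FreeGroup.norm (δ (FreeGroup.of m)) := by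
      have hle1 : FreeGroup.norm (Q * P) ≤ q.length + (W jj).length := by
        calc FreeGroup.norm (Q * P) ≤ FreeGroup.norm Q + FreeGroup.norm P :=
              FreeGroup.norm_mul_le _ _
        _ ≤ q.length + (W jj).length := by
              exact Nat.add_le_add FreeGroup.norm_mk_le FreeGroup.norm_mk_le
      have hle2 : FreeGroup.norm (δ' (FreeGroup.of m)) ≤
          FreeGroup.norm (Q * P) + 1 + FreeGroup.norm (Q * P) := by
        rw [hδ'm]
        calc FreeGroup.norm ((Q * P)⁻¹ * FreeGroup.of m * (Q * P))
            ≤ FreeGroup.norm ((Q * P)⁻¹ * FreeGroup.of m) + FreeGroup.norm (Q * P) :=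
              FreeGroup.norm_mul_le _ _
        _ ≤ FreeGroup.norm ((Q * P)⁻¹) + FreeGroup.norm (FreeGroup.of m)
              + FreeGroup.norm (Q * P) := by
              exact Nat.add_le_add_right (FreeGroup.norm_mul_le _ _) _
        _ = FreeGroup.norm (Q * P) + 1 + FreeGroup.norm (Q * P) := by
              rw [FreeGroup.norm_inv_eq, FreeGroup.norm_of]
      rw [hlenm, hqlen]
      omega
    have hsum : (∑ i : Fin n, FreeGroup.norm (δ' (FreeGroup.of i))) < μ := by
      rw [← hμ]
      apply Finset.sum_lt_sum
      · intro i _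
        by_cases hi : i = m
        · subst hi; exact le_of_lt hlt
        · rw [hδ'fix i hi]
      · exact ⟨m, Finset.mem_univ m, hlt⟩
    have hδ'mem := ih _ hsum δ' hpure' rfl
    have hfin : δ = δ' * A⁻¹ := by
      rw [hδ', mul_inv_cancel_right]
    rw [hfin]
    exact Subgroup.mul_mem _ hδ'mem (Subgroup.inv_mem _ hAmem)

end Pure

end Part2


/-- For `n ≥ 1`, the set `PC*_n` is a subgroup of `Aut(F_n)`, namely it
coincides with the subgroup generated by `σ_1, …, σ_{n-1}, ρ_1, …, ρ_{n-1}, τ_1, …, τ_n`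
(indices `0`-based here). -/
theorem pcStar_eq_closure_sigma_rho_tau (n : ℕ) (hn : 1 ≤ n)
    (σ ρ τ : ℕ → MulAut (FreeGroup (Fin n)))
    (hσ : ∀ i, i + 1 < n → IsSigma n i (σ i))
    (hρ : ∀ i, i + 1 < n → IsRho n i (ρ i))
    (hτ : ∀ i, i < n → IsTau n i (τ i)) :
    PCStarSet n =
      ↑(Subgroup.closure
          ({g | ∃ i, i + 1 < n ∧ g = σ i} ∪ {g | ∃ i, i + 1 < n ∧ g = ρ i} ∪
            {g | ∃ i, i < n ∧ g = τ i})) := by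
  have hset : ({g | ∃ i, i + 1 < n ∧ g = σ i} ∪ {g | ∃ i, i + 1 < n ∧ g = ρ i} ∪
      {g | ∃ i, i < n ∧ g = τ i}) = genSet n σ ρ τ := rfl
  rw [hset]
  apply Set.eq_of_subset_of_subset
  · intro α hα
    obtain ⟨π, ε, w, hε, hw⟩ := hα
    obtain ⟨β, hβmem, hβ⟩ := exists_perm_realize (σ := σ) (τ := τ) hρ π
    obtain ⟨t, htmem, htact, htt⟩ := exists_sign_aut (σ := σ) (ρ := ρ) hτ ε hε
    set δ : MulAut (FreeGroup (Fin n)) := β⁻¹ * α * t with hδ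
    have hpure : ∀ i : Fin n, ∃ v, δ (FreeGroup.of i) = v⁻¹ * FreeGroup.of i * v := by
      intro i
      refine ⟨β⁻¹ (w i), ?_⟩
      have happ : δ (FreeGroup.of i) = β⁻¹ (α (t (FreeGroup.of i))) := rfl
      rw [happ, htact i, _root_.map_zpow, hw i, conj_zpow_eq, ← zpow_mul]
      have hεε : ε i * ε i = 1 := by rcases hε i with h | h <;> rw [h] <;> norm_num
      rw [hεε, zpow_one]
      simp only [_root_.map_mul, _root_.map_inv]
      have hβof : β⁻¹ (FreeGroup.of (π i)) = FreeGroup.of i := by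
        rw [← hβ i, inv_apply_apply]
      rw [hβof]
    have hδmem := pure_mem_closure (τ := τ) hσ hρ δ hpure
    have hαeq : α = β * δ * t⁻¹ := by
      rw [hδ]
      group
    rw [hαeq]
    exact Subgroup.mul_mem _ (Subgroup.mul_mem _ hβmem hδmem) (Subgroup.inv_mem _ htmem)
  · have hle : Subgroup.closure (genSet n σ ρ τ) ≤ pcSubgroup n := by
      rw [Subgroup.closure_le]
      rintro g ((⟨i, hi, rfl⟩ | ⟨i, hi, rfl⟩) | ⟨i, hi, rfl⟩)
      · exact sigma_mem_pcstar hi (hσ i hi)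
      · exact rho_mem_pcstar hi (hρ i hi)
      · exact tau_mem_pcstar hi (hτ i hi)
    intro g hg
    exact hle hg


end LoopBraidGroups
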